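/- Let λ₁, λ₂ > 0, f₁ > 0, f₂ < 0, 0 < ρ ≤ f₁ with Φ(ρ) > 0. Then β₂/(β₂-1) ≥ D₂/Φ(ρ), where β₂ is the positive root of f₁f₂β² - D₁β + D₂ = 0, D₁ = (ρ+λ₁)f₂ + (ρ+λ₂)f₁, and D₂ = (ρ+λ₁)(ρ+λ₂) - λ₁λ₂. -/

import Mathlib

theorem beta2_ratio_ineq
    (l1 l2 f1 f2 ρ : ℝ)
    (hl1 : 0 < l1) (hl2 : 0 < l2) (hf1 : 0 < f1) (hf2 : f2 < 0)
    (hρ : 0 < ρ) (hρf1 : ρ ≤ f1)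
    (hΦ : (ρ + l1 - f1) * (ρ + l2 - f2) - l1 * l2 > 0)
    (D1 D2 β2 : ℝ)
    (hD1 : D1 = (ρ + l1) * f2 + (ρ + l2) * f1)
    (hD2 : D2 = (ρ + l1) * (ρ + l2) - l1 * l2)
    (hβ2 : β2 = (D1 - Real.sqrt (D1 ^ 2 - 4 * f1 * f2 * D2)) / (2 * f1 * f2)) :
    β2 / (β2 - 1) ≥ D2 / ((ρ + l1 - f1) * (ρ + l2 - f2) - l1 * l2) := by
  have hff : f1 * f2 < 0 := mul_neg_of_pos_of_neg hf1 hf2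
  have hD2pos : 0 < D2 := by rw [hD2]; nlinarith
  have hΦ' : 0 < D2 - D1 + f1 * f2 := by rw [hD1, hD2]; nlinarith [hΦ]
  set Δ := D1 ^ 2 - 4 * f1 * f2 * D2 with hΔ
  have hΔpos : 0 < Δ := by nlinarith [sq_nonneg D1, mul_pos (neg_pos.mpr hff) hD2pos]
  set s := Real.sqrt Δ with hs
  have hs0 : 0 ≤ s := Real.sqrt_nonneg _
  have hs2 : s ^ 2 = Δ := Real.sq_sqrt hΔpos.le
  -- s > D1 - 2 f1 f2
  have hsgt : D1 - 2 * (f1 * f2) < s := by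
    nlinarith [mul_pos (neg_pos.mpr hff) hΦ', hs2, hs0, sq_nonneg (s - (D1 - 2 * (f1 * f2)))]
  have hc : (2 * f1 * f2) < 0 := by nlinarith
  have hβgt : 1 < β2 := by
    rw [hβ2, lt_div_iff_of_neg hc]
    linarith
  have hcne : (2 * f1 * f2) ≠ 0 := ne_of_lt hc
  have hQ : f1 * f2 * β2 ^ 2 - D1 * β2 + D2 = 0 := by
    rw [hβ2]
    field_simp [hf2.ne]
    nlinarith [hs2]
  have hβ1pos : 0 < β2 - 1 := by linarith
  rw [ge_iff_le, div_le_div_iff₀ hΦ hβ1pos]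
  nlinarith [hQ, mul_nonneg (neg_nonneg.mpr hff.le) (mul_nonneg (by linarith : (0:ℝ) ≤ β2) hβ1pos.le)]
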